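/- Let Q be the n×n generalized symmetric channel matrix with crossover probability q ∈ [0, 1/n) (diagonal 1-(n-1)q, off-diagonal q), and let P be any n×m stochastic matrix (rows sum to 1, entries nonnegative). Then all entries of Q⁻¹P are nonnegative if and only if for every column x with Σ_s P(s,x) > 0 and every row s, P(s,x)/Σ_{s'} P(s',x) ≥ q. Moreover each row of Q⁻¹P sums to 1. -/

import Mathlib

/-- For the generalized symmetric channel matrix `Q` and a stochastic matrix `P`,
all entries of `Q⁻¹ * P` are nonnegative iff every column with positive sum has all
its normalized entries at least `q`; moreover each row of `Q⁻¹ * P` sums to 1. -/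
theorem gs_inv_mul_stochastic (n m : ℕ) (hn : 1 ≤ n) (q : ℝ)
    (hq : q ∈ Set.Ico (0:ℝ) (1 / n))
    (P : Matrix (Fin n) (Fin m) ℝ)
    (hPnn : ∀ s x, 0 ≤ P s x) (hPsum : ∀ s, ∑ x, P s x = 1) :
    ((∀ s x, 0 ≤ ((Matrix.of (fun s t : Fin n =>
          if s = t then 1 - (n - 1 : ℝ) * q else q))⁻¹ * P) s x) ↔
      (∀ x : Fin m, 0 < ∑ s, P s x → ∀ s : Fin n, q ≤ P s x / ∑ s', P s' x)) ∧
    (∀ s : Fin n, ∑ x, ((Matrix.of (fun s t : Fin n =>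
          if s = t then 1 - (n - 1 : ℝ) * q else q))⁻¹ * P) s x = 1) := by
  set Q : Matrix (Fin n) (Fin n) ℝ := Matrix.of (fun s t : Fin n =>
      if s = t then 1 - (n - 1 : ℝ) * q else q) with hQ
  have hn0 : (0:ℝ) < n := by exact_mod_cast Nat.lt_of_lt_of_le Nat.zero_lt_one hn
  have hqn : q * n < 1 := (lt_div_iff₀ hn0).mp hq.2
  have hc : (0:ℝ) < 1 - n * q := by linarith [hqn]
  set c : ℝ := (1 - n * q)⁻¹ with hcdef
  have hcne : (1 - (n:ℝ)*q) ≠ 0 := ne_of_gt hc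
  have hcpos : 0 < c := inv_pos.mpr hc
  set R : Matrix (Fin n) (Fin n) ℝ := Matrix.of (fun s t : Fin n =>
      c * (if s = t then 1 else 0) - c * q) with hR
  have hQR : Q * R = 1 := by
    ext s u
    have key : ∀ t : Fin n, Q s t * R t u =
        ((1 - n*q) * (if s = t then 1 else 0) + q) *
          (c * (if t = u then 1 else 0) - c * q) := by
      intro t
      simp only [hQ, hR, Matrix.of_apply]
      by_cases h1 : s = t
      · simp only [if_pos h1]; ring
      · simp only [if_neg h1]; ring
    rw [Matrix.mul_apply]
    simp only [key]
    have e1 : ∑ t : Fin n, ((1 - n*q) * (if s = t then 1 else 0) + q) *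
          (c * (if t = u then 1 else 0) - c * q)
        = ∑ t : Fin n, ((1 - n*q) * c * ((if s = t then (if t = u then (1:ℝ) else 0) else 0))
            - (1 - n*q) * c * q * (if s = t then 1 else 0)
            + q * c * (if t = u then 1 else 0) - q * c * q) := by
      apply Finset.sum_congr rfl
      intro t _
      by_cases h1 : s = t
      · by_cases h2 : t = u
        · simp only [if_pos h1, if_pos h2]; ring
        · simp only [if_pos h1, if_neg h2]; ring
      · by_cases h2 : t = u
        · simp only [if_neg h1, if_pos h2]; ring
        · simp only [if_neg h1, if_neg h2]; ring
    rw [e1]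
    simp only [Finset.sum_sub_distrib, Finset.sum_add_distrib, ← Finset.mul_sum,
      Finset.sum_ite_eq, Finset.sum_ite_eq', Finset.mem_univ, if_true, Finset.sum_const,
      Finset.card_univ, Fintype.card_fin, nsmul_eq_mul]
    rw [Matrix.one_apply, hcdef]
    by_cases h : s = u
    · simp only [if_pos h]
      field_simp
      ring
    · simp only [if_neg h]
      field_simp
      ring
  have hQinv : Q⁻¹ = R := Matrix.inv_eq_right_inv hQR
  have entry : ∀ s x, (Q⁻¹ * P) s x = c * P s x - c * q * ∑ t, P t x := by
    intro s x
    rw [hQinv, Matrix.mul_apply]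
    have h1 : ∀ t : Fin n, R s t * P t x
        = c * ((if s = t then 1 else 0) * P t x) - c * q * P t x := by
      intro t; simp only [hR, Matrix.of_apply]; ring
    simp only [h1, Finset.sum_sub_distrib, ← Finset.mul_sum]
    have h2 : ∑ t, (if s = t then (1:ℝ) else 0) * P t x = P s x := by
      rw [Finset.sum_congr rfl (fun t _ => ite_mul (s = t) (1:ℝ) 0 (P t x))]
      simp [Finset.sum_ite_eq]
    rw [h2]
  constructor
  · constructor
    · intro h x hx s
      have h1 := h s x
      rw [entry] at h1
      rw [le_div_iff₀ hx]
      nlinarith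
    · intro h s x
      rw [entry]
      have hS : 0 ≤ ∑ t, P t x := Finset.sum_nonneg (fun t _ => hPnn t x)
      rcases lt_or_eq_of_le hS with hSpos | hS0
      · have := h x hSpos s
        rw [le_div_iff₀ hSpos] at this
        nlinarith
      · rw [← hS0, mul_zero, sub_zero]
        exact mul_nonneg hcpos.le (hPnn s x)
  · intro s
    have key : ∑ x, (Q⁻¹ * P) s x = c * (∑ x, P s x) - c * q * ∑ x, ∑ t, P t x := by
      simp only [entry, Finset.sum_sub_distrib]
      rw [← Finset.mul_sum, ← Finset.mul_sum]
    rw [key, hPsum s, Finset.sum_comm]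
    simp only [hPsum, Finset.sum_const, Finset.card_univ, Fintype.card_fin, nsmul_eq_mul, mul_one]
    rw [hcdef]
    field_simp
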